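/- Let (G, E, ∂, ▷) be a finite reduced crossed module. Let V be a finite linearly ordered type, let Ed be a finite set of pairs (a, b) of elements of V with a < b (the edges), and let Tr be a finite set of triples (a, b, c) of elements of V with a < b < c (the triangles) such that for every (a, b, c) ∈ Tr the three pairs (a, b), (b, c), (a, c) all lie in Ed. A 𝒢-colouring of this 2-dimensional ordered simplicial complex is a pair of functions c₁ : Ed → G and c₂ : Tr → E such that ∂(c₂(a, b, c))⁻¹ · c₁(a, b) · c₁(b, c) = c₁(a, c) for every (a, b, c) ∈ Tr. Let Q = G/∂(E) be the quotient of G by the (normal) image of ∂, with projection π : G → Q. Then the number of 𝒢-colourings equals (#∂(E))^{#Ed} · (#ker ∂)^{#Tr} · #{ d : Ed → Q | d(a, b) · d(b, c) = d(a, c) for all (a, b, c) ∈ Tr }. -/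

import Mathlib

set_option linter.unusedSectionVars false

namespace CMCount

variable {G E V : Type*} [Group G] [Group E] (δ : E →* G) [hN : δ.range.Normal]

/-- A canonical preimage under `δ` of an element of the range. -/
noncomputable def cmPre (x : G) (hx : x ∈ δ.range) : E :=
  (MonoidHom.mem_range.mp hx).choose

lemma cmPre_spec (x : G) (hx : x ∈ δ.range) : δ (cmPre δ x hx) = x :=
  (MonoidHom.mem_range.mp hx).choose_spec

lemma cmPre_congr {x y : G} (hx : x ∈ δ.range) (hy : y ∈ δ.range) (h : x = y) :
    cmPre δ x hx = cmPre δ y hy := by subst h; rfl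

variable (Ed : Finset (V × V)) (Tr : Finset (V × V × V))
  (hTr : ∀ t ∈ Tr,
      (t.1, t.2.1) ∈ Ed ∧ (t.2.1, t.2.2) ∈ Ed ∧ (t.1, t.2.2) ∈ Ed)

def e01 (t : {t // t ∈ Tr}) : {p // p ∈ Ed} := ⟨(t.1.1, t.1.2.1), (hTr t.1 t.2).1⟩
def e12 (t : {t // t ∈ Tr}) : {p // p ∈ Ed} := ⟨(t.1.2.1, t.1.2.2), (hTr t.1 t.2).2.1⟩
def e02 (t : {t // t ∈ Tr}) : {p // p ∈ Ed} := ⟨(t.1.1, t.1.2.2), (hTr t.1 t.2).2.2⟩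

def rval (c1 : {p // p ∈ Ed} → G) (t : {t // t ∈ Tr}) : G :=
  c1 (e01 Ed Tr hTr t) * c1 (e12 Ed Tr hTr t) * (c1 (e02 Ed Tr hTr t))⁻¹

lemma cond_iff (c : ({p // p ∈ Ed} → G) × ({t // t ∈ Tr} → E)) :
    (∀ (t : V × V × V) (ht : t ∈ Tr),
        (δ (c.2 ⟨t, ht⟩))⁻¹ * c.1 ⟨(t.1, t.2.1), (hTr t ht).1⟩ *
            c.1 ⟨(t.2.1, t.2.2), (hTr t ht).2.1⟩ =
          c.1 ⟨(t.1, t.2.2), (hTr t ht).2.2⟩) ↔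
      ∀ t : {t // t ∈ Tr}, δ (c.2 t) = rval Ed Tr hTr c.1 t := by
  constructor
  · intro h t
    obtain ⟨t, ht⟩ := t
    dsimp only [rval, e01, e12, e02]
    rw [← h t ht]
    group
  · intro h t ht
    have h1 := h ⟨t, ht⟩
    dsimp only [rval, e01, e12, e02] at h1
    rw [h1]
    group

lemma dcond_iff (d : {p // p ∈ Ed} → G ⧸ δ.range) :
    (∀ (t : V × V × V) (ht : t ∈ Tr),
        d ⟨(t.1, t.2.1), (hTr t ht).1⟩ * d ⟨(t.2.1, t.2.2), (hTr t ht).2.1⟩ =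
          d ⟨(t.1, t.2.2), (hTr t ht).2.2⟩) ↔
      ∀ t : {t // t ∈ Tr},
        d (e01 Ed Tr hTr t) * d (e12 Ed Tr hTr t) = d (e02 Ed Tr hTr t) := by
  constructor
  · intro h t
    obtain ⟨t, ht⟩ := t
    exact h t ht
  · intro h t ht
    exact h ⟨t, ht⟩

noncomputable def nOf (c1 : {p // p ∈ Ed} → G) (p : {p // p ∈ Ed}) : δ.range :=
  ⟨((QuotientGroup.mk (c1 p) : G ⧸ δ.range)).out⁻¹ * c1 p,
    QuotientGroup.eq.mp (QuotientGroup.out_eq' _)⟩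

def dOf (c1 : {p // p ∈ Ed} → G) (p : {p // p ∈ Ed}) : G ⧸ δ.range :=
  QuotientGroup.mk (c1 p)

noncomputable def kOf (c1 : {p // p ∈ Ed} → G) (c2 : {t // t ∈ Tr} → E)
    (h : ∀ t, δ (c2 t) = rval Ed Tr hTr c1 t) (t : {t // t ∈ Tr}) : δ.ker :=
  ⟨c2 t * (cmPre δ (rval Ed Tr hTr c1 t) (MonoidHom.mem_range.mpr ⟨c2 t, h t⟩))⁻¹, by
    rw [MonoidHom.mem_ker, map_mul, map_inv, cmPre_spec, h t, mul_inv_cancel]⟩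

lemma dOf_cond (c1 : {p // p ∈ Ed} → G) (c2 : {t // t ∈ Tr} → E)
    (h : ∀ t, δ (c2 t) = rval Ed Tr hTr c1 t) (t : {t // t ∈ Tr}) :
    dOf δ Ed c1 (e01 Ed Tr hTr t) * dOf δ Ed c1 (e12 Ed Tr hTr t) =
      dOf δ Ed c1 (e02 Ed Tr hTr t) := by
  have h3 : (QuotientGroup.mk (δ (c2 t)) : G ⧸ δ.range) = 1 :=
    (QuotientGroup.eq_one_iff _).mpr ⟨c2 t, rfl⟩
  have h4 := congrArg (QuotientGroup.mk (s := δ.range)) (h t)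
  rw [h3, rval, QuotientGroup.mk_mul, QuotientGroup.mk_mul, QuotientGroup.mk_inv,
    eq_comm, mul_inv_eq_one] at h4
  exact h4

noncomputable def c1Of (n : {p // p ∈ Ed} → δ.range) (d : {p // p ∈ Ed} → G ⧸ δ.range)
    (p : {p // p ∈ Ed}) : G :=
  (d p).out * (n p : G)

lemma mk_c1Of (n : {p // p ∈ Ed} → δ.range) (d : {p // p ∈ Ed} → G ⧸ δ.range)
    (p : {p // p ∈ Ed}) : (QuotientGroup.mk (c1Of δ Ed n d p) : G ⧸ δ.range) = d p := by
  rw [c1Of, QuotientGroup.mk_mul, QuotientGroup.out_eq',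
    (QuotientGroup.eq_one_iff (_ : G)).mpr (n p).2, mul_one]

lemma rval_mem (n : {p // p ∈ Ed} → δ.range) (d : {p // p ∈ Ed} → G ⧸ δ.range)
    (hd : ∀ t, d (e01 Ed Tr hTr t) * d (e12 Ed Tr hTr t) = d (e02 Ed Tr hTr t))
    (t : {t // t ∈ Tr}) : rval Ed Tr hTr (c1Of δ Ed n d) t ∈ δ.range := by
  rw [← QuotientGroup.eq_one_iff, rval, QuotientGroup.mk_mul, QuotientGroup.mk_mul,
    QuotientGroup.mk_inv, mk_c1Of, mk_c1Of, mk_c1Of, hd t, mul_inv_cancel]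

noncomputable def c2Of (n : {p // p ∈ Ed} → δ.range) (k : {t // t ∈ Tr} → δ.ker)
    (d : {p // p ∈ Ed} → G ⧸ δ.range)
    (hd : ∀ t, d (e01 Ed Tr hTr t) * d (e12 Ed Tr hTr t) = d (e02 Ed Tr hTr t))
    (t : {t // t ∈ Tr}) : E :=
  (k t : E) * cmPre δ (rval Ed Tr hTr (c1Of δ Ed n d) t) (rval_mem δ Ed Tr hTr n d hd t)

lemma c2Of_spec (n : {p // p ∈ Ed} → δ.range) (k : {t // t ∈ Tr} → δ.ker)
    (d : {p // p ∈ Ed} → G ⧸ δ.range)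
    (hd : ∀ t, d (e01 Ed Tr hTr t) * d (e12 Ed Tr hTr t) = d (e02 Ed Tr hTr t))
    (t : {t // t ∈ Tr}) :
    δ (c2Of δ Ed Tr hTr n k d hd t) = rval Ed Tr hTr (c1Of δ Ed n d) t := by
  rw [c2Of, map_mul, cmPre_spec, MonoidHom.mem_ker.mp (k t).2, one_mul]

lemma RT1a (c1 : {p // p ∈ Ed} → G) : c1Of δ Ed (nOf δ Ed c1) (dOf δ Ed c1) = c1 := by
  funext p
  rw [c1Of, nOf, dOf, mul_inv_cancel_left]

lemma RT1b (c1 : {p // p ∈ Ed} → G) (c2 : {t // t ∈ Tr} → E)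
    (h : ∀ t, δ (c2 t) = rval Ed Tr hTr c1 t)
    (hd : ∀ t, dOf δ Ed c1 (e01 Ed Tr hTr t) * dOf δ Ed c1 (e12 Ed Tr hTr t) =
      dOf δ Ed c1 (e02 Ed Tr hTr t)) :
    c2Of δ Ed Tr hTr (nOf δ Ed c1) (kOf δ Ed Tr hTr c1 c2 h) (dOf δ Ed c1) hd = c2 := by
  funext t
  have hr : rval Ed Tr hTr (c1Of δ Ed (nOf δ Ed c1) (dOf δ Ed c1)) t =
      rval Ed Tr hTr c1 t := by rw [RT1a]
  show (c2 t * (cmPre δ (rval Ed Tr hTr c1 t) ⟨c2 t, h t⟩)⁻¹) *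
      cmPre δ (rval Ed Tr hTr (c1Of δ Ed (nOf δ Ed c1) (dOf δ Ed c1)) t)
        (rval_mem δ Ed Tr hTr (nOf δ Ed c1) (dOf δ Ed c1) hd t) = c2 t
  rw [cmPre_congr δ (rval_mem δ Ed Tr hTr (nOf δ Ed c1) (dOf δ Ed c1) hd t)
    (⟨c2 t, h t⟩ : rval Ed Tr hTr c1 t ∈ δ.range) hr, inv_mul_cancel_right]

lemma RT2a (n : {p // p ∈ Ed} → δ.range) (d : {p // p ∈ Ed} → G ⧸ δ.range) :
    nOf δ Ed (c1Of δ Ed n d) = n := by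
  funext p
  apply Subtype.ext
  show ((QuotientGroup.mk (c1Of δ Ed n d p) : G ⧸ δ.range)).out⁻¹ * c1Of δ Ed n d p = n p
  rw [mk_c1Of, c1Of, inv_mul_cancel_left]

lemma RT2b (n : {p // p ∈ Ed} → δ.range) (d : {p // p ∈ Ed} → G ⧸ δ.range) :
    dOf δ Ed (c1Of δ Ed n d) = d := by
  funext p
  exact mk_c1Of δ Ed n d p

lemma RT2c (n : {p // p ∈ Ed} → δ.range) (k : {t // t ∈ Tr} → δ.ker)
    (d : {p // p ∈ Ed} → G ⧸ δ.range)
    (hd : ∀ t, d (e01 Ed Tr hTr t) * d (e12 Ed Tr hTr t) = d (e02 Ed Tr hTr t))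
    (h : ∀ t, δ (c2Of δ Ed Tr hTr n k d hd t) = rval Ed Tr hTr (c1Of δ Ed n d) t) :
    kOf δ Ed Tr hTr (c1Of δ Ed n d) (c2Of δ Ed Tr hTr n k d hd) h = k := by
  funext t
  apply Subtype.ext
  show c2Of δ Ed Tr hTr n k d hd t * (cmPre δ _ _)⁻¹ = (k t : E)
  rw [c2Of, cmPre_congr δ _ (rval_mem δ Ed Tr hTr n d hd t) rfl, mul_inv_cancel_right]

noncomputable def colEquiv' :
    {c : ({p // p ∈ Ed} → G) × ({t // t ∈ Tr} → E) //
        ∀ t : {t // t ∈ Tr}, δ (c.2 t) = rval Ed Tr hTr c.1 t} ≃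
      (({p // p ∈ Ed} → δ.range) × ({t // t ∈ Tr} → δ.ker) ×
        {d : {p // p ∈ Ed} → G ⧸ δ.range //
          ∀ t : {t // t ∈ Tr},
            d (e01 Ed Tr hTr t) * d (e12 Ed Tr hTr t) = d (e02 Ed Tr hTr t)}) where
  toFun c := (nOf δ Ed c.1.1, kOf δ Ed Tr hTr c.1.1 c.1.2 c.2,
    ⟨dOf δ Ed c.1.1, dOf_cond δ Ed Tr hTr c.1.1 c.1.2 c.2⟩)
  invFun x := ⟨(c1Of δ Ed x.1 x.2.2.1, c2Of δ Ed Tr hTr x.1 x.2.1 x.2.2.1 x.2.2.2),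
    c2Of_spec δ Ed Tr hTr x.1 x.2.1 x.2.2.1 x.2.2.2⟩
  left_inv c := Subtype.ext (Prod.ext (RT1a δ Ed c.1.1)
    (RT1b δ Ed Tr hTr c.1.1 c.1.2 c.2 (dOf_cond δ Ed Tr hTr c.1.1 c.1.2 c.2)))
  right_inv x := Prod.ext (RT2a δ Ed x.1 x.2.2.1)
    (Prod.ext (RT2c δ Ed Tr hTr x.1 x.2.1 x.2.2.1 x.2.2.2
        (c2Of_spec δ Ed Tr hTr x.1 x.2.1 x.2.2.1 x.2.2.2))
      (Subtype.ext (RT2b δ Ed x.1 x.2.2.1)))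

end CMCount

open CMCount in
/-- Let `(G, E, δ, ▷)` be a finite reduced crossed module (boundary map
`δ = ∂`).  Let `V` be a finite linearly ordered type of vertices, `Ed` a
finite set of edges `(a, b)` with `a < b`, and `Tr` a finite set of triangles
`(a, b, c)` with `a < b < c`, whose three edges all lie in `Ed`.  A
`𝒢`-colouring is a pair `c = (c₁ : Ed → G, c₂ : Tr → E)` with
`δ(c₂(a,b,c))⁻¹ · c₁(a,b) · c₁(b,c) = c₁(a,c)` for every triangle.  Then the
number of `𝒢`-colourings equals
`(#δ(E))^{#Ed} · (#ker δ)^{#Tr} · #{d : Ed → G/δ(E) | d(a,b)·d(b,c) = d(a,c)}`.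
(The quotient group `G/δ(E)` makes sense since `δ(E)` is normal in `G`,
recorded by the instance `hN`.) -/
theorem crossedModule_count_colourings {G E V : Type*} [Group G] [Group E]
    [Fintype G] [Fintype E] [MulDistribMulAction G E]
    (δ : E →* G)
    (CM1 : ∀ (X : G) (e : E), δ (X • e) = X * δ e * X⁻¹)
    (CM2 : ∀ e f : E, (δ e) • f = e * f * e⁻¹)
    [hN : δ.range.Normal]
    [LinearOrder V] [Fintype V]
    (Ed : Finset (V × V)) (hEd : ∀ p ∈ Ed, p.1 < p.2)
    (Tr : Finset (V × V × V)) (hTrlt : ∀ t ∈ Tr, t.1 < t.2.1 ∧ t.2.1 < t.2.2)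
    (hTr : ∀ t ∈ Tr,
      (t.1, t.2.1) ∈ Ed ∧ (t.2.1, t.2.2) ∈ Ed ∧ (t.1, t.2.2) ∈ Ed) :
    Nat.card {c : ({p // p ∈ Ed} → G) × ({t // t ∈ Tr} → E) //
        ∀ (t : V × V × V) (ht : t ∈ Tr),
          (δ (c.2 ⟨t, ht⟩))⁻¹ * c.1 ⟨(t.1, t.2.1), (hTr t ht).1⟩ *
              c.1 ⟨(t.2.1, t.2.2), (hTr t ht).2.1⟩ =
            c.1 ⟨(t.1, t.2.2), (hTr t ht).2.2⟩} =
      Nat.card δ.range ^ Ed.card * Nat.card δ.ker ^ Tr.card *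
        Nat.card {d : {p // p ∈ Ed} → G ⧸ δ.range //
          ∀ (t : V × V × V) (ht : t ∈ Tr),
            d ⟨(t.1, t.2.1), (hTr t ht).1⟩ * d ⟨(t.2.1, t.2.2), (hTr t ht).2.1⟩ =
              d ⟨(t.1, t.2.2), (hTr t ht).2.2⟩} := by
  have E1 := (Equiv.subtypeEquivRight (cond_iff δ Ed Tr hTr)).trans
    (colEquiv' δ Ed Tr hTr)
  have E2 := Equiv.subtypeEquivRight (fun d => (dcond_iff δ Ed Tr hTr d).symm)
  rw [Nat.card_congr E1, Nat.card_prod, Nat.card_prod, Nat.card_fun, Nat.card_fun,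
    Nat.card_congr E2, Nat.card_eq_fintype_card (α := {p // p ∈ Ed}),
    Nat.card_eq_fintype_card (α := {t // t ∈ Tr}), Fintype.card_coe, Fintype.card_coe,
    mul_assoc]
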